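/- The function x ↦ log(g⁻¹(x) + 1) + 1 is convex and increasing on [0,∞). Concretely: (i) g is strictly increasing on [0,∞); and (ii) for all y₁, y₂ > 0, all t ∈ [0,1], and all y > 0 with g(y) = t·g(y₁) + (1−t)·g(y₂), one has log(y+1) ≤ t·log(y₁+1) + (1−t)·log(y₂+1). -/

import Mathlib

/-- `g(E) = (E+1)·log(E+1) − E·log E` (note `Real.log 0 = 0`, so `g 0 = 0`). -/
noncomputable def g (E : ℝ) : ℝ := (E + 1) * Real.log (E + 1) - E * Real.log E

lemma g_continuous : Continuous g := by
  have h : Continuous fun x : ℝ => x * Real.log x := Real.continuous_mul_log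
  exact (h.comp (continuous_id.add continuous_const)).sub h

lemma hasDerivAt_g {x : ℝ} (hx : 0 < x) :
    HasDerivAt g (Real.log (x + 1) - Real.log x) x := by
  have h1 : HasDerivAt (fun y : ℝ => (y + 1) * Real.log (y + 1))
      (Real.log (x + 1) + 1) x := by
    have := (Real.hasDerivAt_mul_log (x := x + 1) (by positivity)).comp x
      ((hasDerivAt_id x).add_const 1)
    simpa [Function.comp_def] using this
  have h2 : HasDerivAt (fun y : ℝ => y * Real.log y) (Real.log x + 1) x :=
    Real.hasDerivAt_mul_log hx.ne'
  have := h1.sub h2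
  exact this.congr_deriv (by ring)

lemma g_strictMono : StrictMonoOn g (Set.Ici (0 : ℝ)) := by
  apply strictMonoOn_of_deriv_pos (convex_Ici 0) g_continuous.continuousOn
  intro x hx
  rw [interior_Ici] at hx
  rw [(hasDerivAt_g hx).deriv]
  have := Real.log_lt_log hx (by linarith : x < x + 1)
  linarith

/-- `ψ(s) = g(e^s − 1)`. -/
noncomputable def psi (s : ℝ) : ℝ := g (Real.exp s - 1)

/-- `ψ'(s) = e^s (s − log(e^s − 1))`. -/
noncomputable def psi' (s : ℝ) : ℝ := Real.exp s * (s - Real.log (Real.exp s - 1))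

lemma exp_sub_one_pos {s : ℝ} (hs : 0 < s) : 0 < Real.exp s - 1 := by
  have := Real.add_one_lt_exp hs.ne'
  linarith

lemma hasDerivAt_psi {s : ℝ} (hs : 0 < s) : HasDerivAt psi (psi' s) s := by
  have hu : 0 < Real.exp s - 1 := exp_sub_one_pos hs
  have hE : HasDerivAt (fun s : ℝ => Real.exp s - 1) (Real.exp s) s :=
    (Real.hasDerivAt_exp s).sub_const 1
  have h := (hasDerivAt_g hu).comp s hE
  have hlog : Real.log (Real.exp s - 1 + 1) = s := by
    rw [sub_add_cancel, Real.log_exp]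
  have : HasDerivAt psi ((Real.log (Real.exp s - 1 + 1) - Real.log (Real.exp s - 1))
      * Real.exp s) s := h
  rw [hlog] at this
  exact this.congr_deriv (by rw [psi']; ring)

lemma hasDerivAt_psi' {s : ℝ} (hs : 0 < s) :
    HasDerivAt psi'
      (Real.exp s * (s - Real.log (Real.exp s - 1) + 1 - Real.exp s / (Real.exp s - 1))) s := by
  have hu : 0 < Real.exp s - 1 := exp_sub_one_pos hs
  have hE : HasDerivAt (fun s : ℝ => Real.exp s - 1) (Real.exp s) s :=
    (Real.hasDerivAt_exp s).sub_const 1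
  have hlog : HasDerivAt (fun s : ℝ => Real.log (Real.exp s - 1))
      ((Real.exp s - 1)⁻¹ * Real.exp s) s := by
    have := (Real.hasDerivAt_log hu.ne').comp s hE; exact this
  have h := (Real.hasDerivAt_exp s).mul ((hasDerivAt_id s).sub hlog)
  refine h.congr_deriv ?_
  simp only [Pi.sub_apply, id_eq]
  field_simp
  ring

lemma psi_concave : ConcaveOn ℝ (Set.Ici (0 : ℝ)) psi := by
  refine concaveOn_of_hasDerivWithinAt2_nonpos (convex_Ici 0)
    ((g_continuous.comp ((Real.continuous_exp).sub continuous_const)).continuousOn)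
    (f' := psi')
    (f'' := fun s => Real.exp s * (s - Real.log (Real.exp s - 1) + 1
      - Real.exp s / (Real.exp s - 1)))
    (fun x hx => ?_) (fun x hx => ?_) (fun x hx => ?_)
  · rw [interior_Ici] at hx
    exact (hasDerivAt_psi hx).hasDerivWithinAt
  · rw [interior_Ici] at hx
    exact (hasDerivAt_psi' hx).hasDerivWithinAt
  · rw [interior_Ici] at hx
    have hu : 0 < Real.exp x - 1 := exp_sub_one_pos hx
    have hkey : x - Real.log (Real.exp x - 1) ≤ Real.exp x / (Real.exp x - 1) - 1 := by
      have h1 : Real.log (Real.exp x / (Real.exp x - 1)) ≤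
          Real.exp x / (Real.exp x - 1) - 1 :=
        Real.log_le_sub_one_of_pos (by positivity)
      rwa [Real.log_div (Real.exp_pos x).ne' hu.ne', Real.log_exp] at h1
    have : x - Real.log (Real.exp x - 1) + 1 - Real.exp x / (Real.exp x - 1) ≤ 0 := by
      linarith
    exact mul_nonpos_of_nonneg_of_nonpos (Real.exp_pos x).le this

theorem log_ginv_convex_increasing :
    StrictMonoOn g (Set.Ici (0 : ℝ)) ∧
    ∀ y₁ y₂ : ℝ, 0 < y₁ → 0 < y₂ → ∀ t ∈ Set.Icc (0 : ℝ) 1, ∀ y : ℝ, 0 < y →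
      g y = t * g y₁ + (1 - t) * g y₂ →
      Real.log (y + 1) ≤ t * Real.log (y₁ + 1) + (1 - t) * Real.log (y₂ + 1) := by
  refine ⟨g_strictMono, ?_⟩
  intro y₁ y₂ hy₁ hy₂ t ht y hy hgy
  set a := Real.log (y₁ + 1) with ha
  set b := Real.log (y₂ + 1) with hb
  have ha0 : 0 ≤ a := Real.log_nonneg (by linarith)
  have hb0 : 0 ≤ b := Real.log_nonneg (by linarith)
  have hpa : psi a = g y₁ := by
    rw [psi, ha, Real.exp_log (by linarith), add_sub_cancel_right]
  have hpb : psi b = g y₂ := by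
    rw [psi, hb, Real.exp_log (by linarith), add_sub_cancel_right]
  set c := t * a + (1 - t) * b with hc
  have hc0 : 0 ≤ c := by
    have h1 : 0 ≤ t := ht.1
    have h2 : 0 ≤ 1 - t := by linarith [ht.2]
    positivity
  have hconc := psi_concave.2 (Set.mem_Ici.mpr ha0) (Set.mem_Ici.mpr hb0)
    ht.1 (by linarith [ht.2] : (0:ℝ) ≤ 1 - t) (by ring)
  -- hconc : t • psi a + (1-t) • psi b ≤ psi (t • a + (1-t) • b)
  have hgc : g y ≤ psi c := by
    rw [hgy]
    calc t * g y₁ + (1 - t) * g y₂ = t • psi a + (1 - t) • psi b := by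
          rw [hpa, hpb]; simp [smul_eq_mul]
      _ ≤ psi (t • a + (1 - t) • b) := hconc
      _ = psi c := by simp [hc, smul_eq_mul]
  have hec : 0 ≤ Real.exp c - 1 := by
    have := Real.one_le_exp hc0
    linarith
  have hyle : y ≤ Real.exp c - 1 := by
    by_contra hlt
    push_neg at hlt
    have := g_strictMono (Set.mem_Ici.mpr hec) (Set.mem_Ici.mpr hy.le) hlt
    rw [psi] at hgc
    linarith
  calc Real.log (y + 1) ≤ Real.log (Real.exp c) := by
        apply Real.log_le_log (by linarith)
        linarith
    _ = c := Real.log_exp c
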